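/- Let v_t be a wide-sense stationary ℝ^{d_y}-valued process with autocorrelation R_t = E[v_s v_{s−t}ᵀ] satisfying ‖R‖_⋆ = Σ_{t=0}^∞ t‖R_t‖_op < ∞, and let R_{−t} = R_tᵀ. Define the power spectrum Φ_v(k) = Σ_{t=−∞}^∞ R_t e^{−jω_k t} and the aliased (finite-horizon) power spectrum Φ_{v,N}(k) = E[V_k V_k*] where V_k = (1/√N) Σ_{t=0}^{N−1} v_t e^{−jω_k t} and ω_k = 2πk/N. Then sup_{k∈{0,…,N−1}} ‖Φ_v(k) − Φ_{v,N}(k)‖_op ≤ 2‖R‖_⋆ / N. -/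

import Mathlib

open MeasureTheory Matrix

/-- The continuous linear map associated with a complex square matrix
(Euclidean norms); its norm is the matrix operator norm. -/
noncomputable def matCLM {dy : ℕ} (g : Matrix (Fin dy) (Fin dy) ℂ) :
    EuclideanSpace ℂ (Fin dy) →L[ℂ] EuclideanSpace ℂ (Fin dy) :=
  LinearMap.toContinuousLinearMap (Matrix.toEuclideanLin g)

/-- The `N`-point DFT of a stochastic signal at frequency index `k`, pointwise
in the sample `ω`. -/
noncomputable def dftNoise {dy : ℕ} {Ω : Type*} (N : ℕ) (v : ℤ → Ω → Fin dy → ℝ)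
    (k : ℕ) (ω : Ω) : Fin dy → ℂ :=
  fun i => (Real.sqrt N : ℂ)⁻¹ *
    ∑ t ∈ Finset.range N,
      (v t ω i : ℂ) * Complex.exp (-((2 * Real.pi * k * t / N : ℝ) : ℂ) * Complex.I)

open scoped Matrix.Norms.L2Operator in
lemma matCLM_norm_conjTranspose {dy : ℕ} (A : Matrix (Fin dy) (Fin dy) ℂ) :
    ‖matCLM Aᴴ‖ = ‖matCLM A‖ := by
  have h : ∀ B : Matrix (Fin dy) (Fin dy) ℂ, ‖matCLM B‖ = ‖B‖ := by
    intro B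
    rw [Matrix.l2_opNorm_def, LinearEquiv.trans_apply]
    rfl
  rw [h, h, Matrix.l2_opNorm_conjTranspose]

lemma matCLM_smul {dy : ℕ} (c : ℂ) (A : Matrix (Fin dy) (Fin dy) ℂ) :
    matCLM (c • A) = c • matCLM A := by
  unfold matCLM
  rw [_root_.map_smul, _root_.map_smul]

set_option synthInstance.maxHeartbeats 1000000 in
lemma matCLM_sum {dy : ℕ} {α : Type*} (s : Finset α) (f : α → Matrix (Fin dy) (Fin dy) ℂ) :
    matCLM (∑ x ∈ s, f x) = ∑ x ∈ s, matCLM (f x) := by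
  unfold matCLM
  rw [_root_.map_sum, _root_.map_sum]

lemma summable_of_summable_mul {a : ℕ → ℝ} (ha0 : ∀ m, 0 ≤ a m)
    (hs : Summable fun m : ℕ => (m : ℝ) * a m) : Summable a := by
  have h1 : Summable (fun m : ℕ => a (m + 1)) := by
    refine Summable.of_nonneg_of_le (fun m => ha0 _) (fun m => ?_)
      ((summable_nat_add_iff 1).2 hs)
    have h1m : (1 : ℝ) ≤ ((m + 1 : ℕ) : ℝ) := by exact_mod_cast Nat.one_le_iff_ne_zero.2 (by omega)
    simpa using le_mul_of_one_le_left (ha0 (m + 1)) h1m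
  exact (summable_nat_add_iff 1).1 h1

/-- Counting lemma: `∑_{j<N} ∑_{m>j} a m ≤ ∑ m * a m`. -/
lemma sum_tsum_tail_le {a : ℕ → ℝ} (ha0 : ∀ m, 0 ≤ a m)
    (hs : Summable fun m : ℕ => (m : ℝ) * a m) (N : ℕ) :
    ∑ j ∈ Finset.range N, ∑' r : ℕ, a (j + 1 + r) ≤ ∑' m : ℕ, (m : ℝ) * a m := by
  classical
  have hsa : Summable a := summable_of_summable_mul ha0 hs
  have hFsum : ∀ j : ℕ, Summable (fun m : ℕ => if j + 1 ≤ m then a m else 0) := by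
    intro j
    refine Summable.of_nonneg_of_le (fun m => ?_) (fun m => ?_) hsa
    · by_cases h : j + 1 ≤ m <;> simp [h, ha0]
    · by_cases h : j + 1 ≤ m <;> simp [h, ha0]
  have hF : ∀ j : ℕ, (∑' r : ℕ, a (j + 1 + r))
      = ∑' m : ℕ, (if j + 1 ≤ m then a m else 0) := by
    intro j
    have hinj : Function.Injective (fun r : ℕ => j + 1 + r) := fun x y h => by
      simpa using h
    have hsupp : Function.support (fun m : ℕ => if j + 1 ≤ m then a m else 0)
        ⊆ Set.range (fun r : ℕ => j + 1 + r) := by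
      intro m hm
      by_cases h : j + 1 ≤ m
      · exact ⟨m - (j + 1), by show j + 1 + (m - (j + 1)) = m; omega⟩
      · simp [Function.mem_support, h] at hm; omega
    have h := hinj.tsum_eq hsupp
    rw [← h]
    exact tsum_congr fun r => by simp
  calc ∑ j ∈ Finset.range N, ∑' r : ℕ, a (j + 1 + r)
      = ∑' m : ℕ, ∑ j ∈ Finset.range N, (if j + 1 ≤ m then a m else 0) := by
        rw [Finset.sum_congr rfl fun j _ => hF j]
        exact (Summable.tsum_finsetSum fun j _ => hFsum j).symm
    _ ≤ ∑' m : ℕ, (m : ℝ) * a m := by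
        refine Summable.tsum_le_tsum (fun m => ?_) (summable_sum fun j _ => hFsum j) hs
        have hcard : ((Finset.range N).filter (fun j => j + 1 ≤ m)).card ≤ m := by
          calc ((Finset.range N).filter (fun j => j + 1 ≤ m)).card
              ≤ (Finset.range m).card := by
                refine Finset.card_le_card ?_
                intro j hj
                simp only [Finset.mem_filter, Finset.mem_range] at hj ⊢
                omega
            _ = m := Finset.card_range m
        calc ∑ j ∈ Finset.range N, (if j + 1 ≤ m then a m else 0)
            = ∑ _j ∈ (Finset.range N).filter (fun j => j + 1 ≤ m), a m :=
              (Finset.sum_filter _ _).symm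
          _ = (((Finset.range N).filter (fun j => j + 1 ≤ m)).card : ℝ) * a m := by
              rw [Finset.sum_const, nsmul_eq_mul]
          _ ≤ (m : ℝ) * a m := by
              exact mul_le_mul_of_nonneg_right (by exact_mod_cast hcard) (ha0 m)

/-- Abstract form of the transient bound. -/
lemma abstract_transient_bound {E : Type*} [NormedAddCommGroup E] [NormedSpace ℂ E]
    [CompleteSpace E] (g : ℤ → E) (a : ℕ → ℝ)
    (hnorm : ∀ u : ℤ, ‖g u‖ = a u.natAbs)
    (hs : Summable fun m : ℕ => (m : ℝ) * a m)
    (N : ℕ) (hN : 0 < N) (M : E)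
    (hM : M = (N : ℂ)⁻¹ • ∑ t ∈ Finset.range N, ∑ s ∈ Finset.range N, g ((t : ℤ) - (s : ℤ))) :
    ‖(∑' u : ℤ, g u) - M‖ ≤ 2 * (∑' m : ℕ, (m : ℝ) * a m) / N := by
  classical
  have ha0 : ∀ m, 0 ≤ a m := fun m => by
    have := hnorm (m : ℤ)
    simp only [Int.natAbs_natCast] at this
    rw [← this]; exact norm_nonneg _
  have hsa : Summable a := summable_of_summable_mul ha0 hs
  have hgnat : ∀ n : ℕ, ‖g (n : ℤ)‖ = a n := fun n => by
    simpa using hnorm (n : ℤ)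
  have hgZ : Summable fun u : ℤ => ‖g u‖ := by
    refine Summable.of_nat_of_neg (hsa.congr fun n => (hgnat n).symm) ?_
    refine hsa.congr fun n => ?_
    rw [hnorm]
    simp
  have hg : Summable g := hgZ.of_norm
  have hshift : ∀ c : ℕ, Summable fun r : ℕ => a (c + r) := by
    intro c
    refine ((summable_nat_add_iff c).2 hsa).congr fun n => by rw [add_comm]
  -- the finite index set inside ℤ
  set ι : ℕ ↪ ℤ := ⟨fun n => (n : ℤ), fun x y h => by simpa using h⟩ with hι
  set A : Finset ℤ := (Finset.range N).map ι with hA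
  have hmemA : ∀ s : ℤ, s ∈ A ↔ 0 ≤ s ∧ s < N := by
    intro s
    simp only [hA, Finset.mem_map, Finset.mem_range, hι, Function.Embedding.coeFn_mk]
    constructor
    · rintro ⟨m, hm, rfl⟩; change 0 ≤ (m:ℤ) ∧ (m:ℤ) < N; omega
    · rintro ⟨h0, h1⟩; exact ⟨s.toNat, by omega, by change ((s.toNat : ℕ) : ℤ) = s; omega⟩
  -- rewrite the tsum
  have h1 : ∑' u : ℤ, g u
      = (N : ℂ)⁻¹ • ∑ t ∈ Finset.range N, ∑' s : ℤ, g ((t : ℤ) - s) := by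
    have he : ∀ t : ℤ, (∑' s : ℤ, g (t - s)) = ∑' u : ℤ, g u := fun t =>
      (Equiv.subLeft t).tsum_eq g
    rw [Finset.sum_congr rfl fun (t : ℕ) _ => he (t : ℤ), Finset.sum_const, Finset.card_range,
      ← Nat.cast_smul_eq_nsmul ℂ, smul_smul,
      inv_mul_cancel₀ (by exact_mod_cast hN.ne' : (N : ℂ) ≠ 0), one_smul]
  have hMsum : ∀ t : ℕ, ∑ s ∈ Finset.range N, g ((t : ℤ) - (s : ℤ)) =
      ∑ s ∈ A, g ((t : ℤ) - s) := by
    intro t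
    rw [hA, Finset.sum_map]
    rfl
  have hsummt : ∀ t : ℕ, Summable fun s : ℤ => g ((t : ℤ) - s) := fun t =>
    ((Equiv.subLeft (t : ℤ)).summable_iff (f := g)).2 hg
  have hsummtn : ∀ t : ℕ, Summable fun s : ℤ => ‖g ((t : ℤ) - s)‖ := fun t =>
    ((Equiv.subLeft (t : ℤ)).summable_iff (f := fun u => ‖g u‖)).2 hgZ
  -- per-index error bound
  have hkey : ∀ t ∈ Finset.range N,
      ‖(∑' s : ℤ, g ((t : ℤ) - s)) - ∑ s ∈ Finset.range N, g ((t : ℤ) - (s : ℤ))‖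
        ≤ (∑' r : ℕ, a ((N - t) + r)) + ∑' r : ℕ, a (t + 1 + r) := by
    intro t ht
    rw [Finset.mem_range] at ht
    have hd : (∑' s : ℤ, g ((t : ℤ) - s)) - ∑ s ∈ Finset.range N, g ((t : ℤ) - (s : ℤ))
        = ∑' (x : ↑(↑A : Set ℤ)ᶜ), g ((t : ℤ) - ↑x) := by
      rw [hMsum t, eq_comm, eq_sub_iff_add_eq, add_comm]
      exact Summable.sum_add_tsum_compl (hsummt t)
    rw [hd]
    set F : ℤ → ℝ := Set.indicator (↑A : Set ℤ)ᶜ (fun s => ‖g ((t : ℤ) - s)‖) with hF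
    have hFle : ∀ s : ℤ, F s ≤ ‖g ((t : ℤ) - s)‖ := by
      intro s
      by_cases h : s ∈ (↑A : Set ℤ)ᶜ
      · rw [hF, Set.indicator_of_mem h]
      · rw [hF, Set.indicator_of_notMem h]; positivity
    have hF0 : ∀ s : ℤ, 0 ≤ F s := by
      intro s
      by_cases h : s ∈ (↑A : Set ℤ)ᶜ
      · rw [hF, Set.indicator_of_mem h]; positivity
      · rw [hF, Set.indicator_of_notMem h]
    have hFs : Summable F := (hsummtn t).indicator _
    have step1 : ‖∑' (x : ↑(↑A : Set ℤ)ᶜ), g ((t : ℤ) - ↑x)‖ ≤ ∑' s : ℤ, F s := by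
      refine le_trans (norm_tsum_le_tsum_norm ((hsummtn t).subtype _)) ?_
      rw [hF, ← tsum_subtype]
    -- values of F on negatives
    have hneg : ∀ n : ℕ, F (-((n : ℤ) + 1)) = a (t + 1 + n) := by
      intro n
      have hmem : (-((n : ℤ) + 1)) ∈ (↑A : Set ℤ)ᶜ := by
        simp only [Set.mem_compl_iff, Finset.coe_sort_coe, Finset.mem_coe, hmemA]
        omega
      rw [hF, Set.indicator_of_mem hmem, hnorm]
      congr 1
      omega
    have hnegs : Summable fun n : ℕ => F (-((n : ℤ) + 1)) :=
      (hshift (t + 1)).congr fun n => by rw [← hneg n]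
    -- values of F on naturals
    have hnats : Summable fun n : ℕ => F (n : ℤ) :=
      Summable.of_nonneg_of_le (fun n => hF0 _) (fun n => hFle _)
        ((hsummtn t).comp_injective (fun x y h => by exact_mod_cast h))
    have hposval : ∀ r : ℕ, F ((N + r : ℕ) : ℤ) = a ((N - t) + r) := by
      intro r
      have hmem : (((N + r : ℕ) : ℤ)) ∈ (↑A : Set ℤ)ᶜ := by
        simp only [Set.mem_compl_iff, Finset.coe_sort_coe, Finset.mem_coe, hmemA]
        omega
      rw [hF, Set.indicator_of_mem hmem, hnorm]
      congr 1
      omega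
    have hpos : (∑' n : ℕ, F (n : ℤ)) = ∑' r : ℕ, a ((N - t) + r) := by
      have hinj : Function.Injective (fun r : ℕ => N + r) := fun x y h => by
        simpa using h
      have hsupp : Function.support (fun n : ℕ => F (n : ℤ))
          ⊆ Set.range (fun r : ℕ => N + r) := by
        intro n hn
        by_cases h : N ≤ n
        · exact ⟨n - N, by show N + (n - N) = n; omega⟩
        · exfalso
          apply hn
          show F (n : ℤ) = 0
          rw [hF, Set.indicator_of_notMem]
          simp only [Set.mem_compl_iff, Finset.coe_sort_coe, Finset.mem_coe, hmemA, not_not]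
          omega
      have h := hinj.tsum_eq (f := fun n : ℕ => F (n : ℤ)) hsupp
      rw [← h]
      exact tsum_congr fun r => hposval r
    have hsplit : (∑' s : ℤ, F s) = (∑' n : ℕ, F (n : ℤ)) + ∑' n : ℕ, F (-((n : ℤ) + 1)) :=
      (hnats.hasSum.of_nat_of_neg_add_one hnegs.hasSum).tsum_eq
    calc ‖∑' (x : ↑(↑A : Set ℤ)ᶜ), g ((t : ℤ) - ↑x)‖
        ≤ ∑' s : ℤ, F s := step1
      _ = (∑' n : ℕ, F (n : ℤ)) + ∑' n : ℕ, F (-((n : ℤ) + 1)) := hsplit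
      _ = (∑' r : ℕ, a ((N - t) + r)) + ∑' r : ℕ, a (t + 1 + r) := by
          rw [hpos]
          congr 1
          exact tsum_congr fun n => hneg n
  -- sum the per-index bounds
  have hsum_bound : ∑ t ∈ Finset.range N,
      ((∑' r : ℕ, a ((N - t) + r)) + ∑' r : ℕ, a (t + 1 + r))
        ≤ 2 * ∑' m : ℕ, (m : ℝ) * a m := by
    rw [Finset.sum_add_distrib]
    have hrefl : ∑ t ∈ Finset.range N, (∑' r : ℕ, a ((N - t) + r))
        = ∑ t ∈ Finset.range N, ∑' r : ℕ, a (t + 1 + r) := by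
      rw [← Finset.sum_range_reflect (fun t => ∑' r : ℕ, a (t + 1 + r)) N]
      refine Finset.sum_congr rfl fun j hj => ?_
      rw [Finset.mem_range] at hj
      exact tsum_congr fun r => by congr 1; omega
    rw [hrefl, two_mul]
    exact add_le_add (sum_tsum_tail_le ha0 hs N) (sum_tsum_tail_le ha0 hs N)
  -- assemble
  have hfinal : ‖(∑' u : ℤ, g u) - M‖
      ≤ (N : ℝ)⁻¹ * (2 * ∑' m : ℕ, (m : ℝ) * a m) := by
    rw [hM, h1, ← smul_sub, ← Finset.sum_sub_distrib, norm_smul]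
    have hnormN : ‖((N : ℂ))⁻¹‖ = (N : ℝ)⁻¹ := by
      rw [norm_inv, Complex.norm_natCast]
    rw [hnormN]
    refine mul_le_mul_of_nonneg_left ?_ (by positivity)
    refine le_trans (norm_sum_le _ _) ?_
    exact le_trans (Finset.sum_le_sum hkey) hsum_bound
  calc ‖(∑' u : ℤ, g u) - M‖ ≤ (N : ℝ)⁻¹ * (2 * ∑' m : ℕ, (m : ℝ) * a m) := hfinal
    _ = 2 * (∑' m : ℕ, (m : ℝ) * a m) / N := by ring

/-- **stochastic transient.** For a wide-sense stationary process
with strictly stable autocorrelation, the aliased power spectrum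
`Φ_{v,N}(k) = E[V_k V_k*]` satisfies
`sup_{k∈[N]} ‖Φ_v(k) − Φ_{v,N}(k)‖_op ≤ 2‖R‖_⋆/N`. -/
theorem stochastic_transient {dy : ℕ}
    (Ω : Type*) [MeasurableSpace Ω] (μ : Measure Ω) [IsProbabilityMeasure μ]
    (v : ℤ → Ω → Fin dy → ℝ)
    (hmeas : ∀ t i, Measurable fun ω => v t ω i)
    (R : ℤ → Matrix (Fin dy) (Fin dy) ℝ)
    (hint : ∀ s t : ℤ, ∀ i i' : Fin dy, Integrable (fun ω => v s ω i * v (s - t) ω i') μ)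
    (hR : ∀ s t : ℤ, ∀ i i' : Fin dy, ∫ ω, v s ω i * v (s - t) ω i' ∂μ = R t i i')
    (hsym : ∀ t : ℤ, R (-t) = (R t)ᵀ)
    (hstar : Summable fun t : ℕ => (t : ℝ) * ‖matCLM ((R t).map fun x => (x : ℂ))‖)
    (N : ℕ) (hN : 0 < N) :
    ∀ k < N,
      ‖(∑' t : ℤ, Complex.exp (-((2 * Real.pi * k * t / N : ℝ) : ℂ) * Complex.I) •
            matCLM ((R t).map fun x => (x : ℂ))) -
          matCLM (Matrix.of fun i i' =>
            ∫ ω, dftNoise N v k ω i * (starRingEnd ℂ) (dftNoise N v k ω i') ∂μ)‖ ≤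
        2 * (∑' t : ℕ, (t : ℝ) * ‖matCLM ((R t).map fun x => (x : ℂ))‖) / N := by
  intro k hk
  classical
  set g : ℤ → (EuclideanSpace ℂ (Fin dy) →L[ℂ] EuclideanSpace ℂ (Fin dy)) :=
    fun u => Complex.exp (-((2 * Real.pi * k * u / N : ℝ) : ℂ) * Complex.I) •
      matCLM ((R u).map fun x => (x : ℂ)) with hg
  set a : ℕ → ℝ := fun m => ‖matCLM ((R (m : ℤ)).map fun x => (x : ℂ))‖ with ha
  have hone : ∀ r : ℝ, ‖Complex.exp (-(r : ℂ) * Complex.I)‖ = 1 := by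
    intro r
    rw [show -(r : ℂ) * Complex.I = ((-r : ℝ) : ℂ) * Complex.I by push_cast; ring,
      Complex.norm_exp_ofReal_mul_I]
  have hnorm : ∀ u : ℤ, ‖g u‖ = a u.natAbs := by
    intro u
    rw [hg]
    simp only
    rw [norm_smul (Complex.exp (-((2 * Real.pi * k * u / N : ℝ) : ℂ) * Complex.I))
      (matCLM ((R u).map fun x => (x : ℂ))), hone, one_mul, ha]
    simp only
    rcases Int.natAbs_eq u with h | h
    · rw [← h]
    · conv_lhs => rw [h, hsym]
      have hct : ((R ((u.natAbs : ℕ) : ℤ))ᵀ).map (fun x => (x : ℂ))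
          = (((R ((u.natAbs : ℕ) : ℤ)).map fun x => (x : ℂ)))ᴴ := by
        ext i j
        simp [Matrix.conjTranspose_apply, Matrix.map_apply, Matrix.transpose_apply,
          Complex.conj_ofReal]
      rw [hct, matCLM_norm_conjTranspose]
  -- the aliased spectrum identity
  have hM : matCLM (Matrix.of fun i i' =>
        ∫ ω, dftNoise N v k ω i * (starRingEnd ℂ) (dftNoise N v k ω i') ∂μ)
      = (N : ℂ)⁻¹ • ∑ t ∈ Finset.range N, ∑ s ∈ Finset.range N, g ((t : ℤ) - (s : ℤ)) := by
    have hee : ∀ t s : ℕ,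
        Complex.exp (-((2 * Real.pi * k * t / N : ℝ) : ℂ) * Complex.I) *
          (starRingEnd ℂ) (Complex.exp (-((2 * Real.pi * k * s / N : ℝ) : ℂ) * Complex.I))
        = Complex.exp
            (-((2 * Real.pi * k * (((t : ℤ) - (s : ℤ) : ℤ) : ℝ) / N : ℝ) : ℂ) * Complex.I) := by
      intro t s
      rw [← Complex.exp_conj, ← Complex.exp_add]
      congr 1
      simp only [_root_.map_mul, map_neg, Complex.conj_ofReal, Complex.conj_I]
      push_cast
      ring
    have hentry : ∀ i i' : Fin dy,
        (∫ ω, dftNoise N v k ω i * (starRingEnd ℂ) (dftNoise N v k ω i') ∂μ)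
        = ∑ t ∈ Finset.range N, ∑ s ∈ Finset.range N,
            ((R ((t : ℤ) - (s : ℤ)) i i' : ℝ) : ℂ) *
              ((N : ℂ)⁻¹ *
                (Complex.exp (-((2 * Real.pi * k * t / N : ℝ) : ℂ) * Complex.I) *
                  (starRingEnd ℂ)
                    (Complex.exp (-((2 * Real.pi * k * s / N : ℝ) : ℂ) * Complex.I)))) := by
      intro i i'
      have hpoint : ∀ ω, dftNoise N v k ω i * (starRingEnd ℂ) (dftNoise N v k ω i')
          = ∑ t ∈ Finset.range N, ∑ s ∈ Finset.range N,
              ((v t ω i * v s ω i' : ℝ) : ℂ) *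
                ((N : ℂ)⁻¹ *
                  (Complex.exp (-((2 * Real.pi * k * t / N : ℝ) : ℂ) * Complex.I) *
                    (starRingEnd ℂ)
                      (Complex.exp (-((2 * Real.pi * k * s / N : ℝ) : ℂ) * Complex.I)))) := by
        intro ω
        have hc : ((Real.sqrt N : ℝ) : ℂ)⁻¹ * ((Real.sqrt N : ℝ) : ℂ)⁻¹ = (N : ℂ)⁻¹ := by
          rw [← mul_inv, ← Complex.ofReal_mul, Real.mul_self_sqrt (Nat.cast_nonneg N),
            Complex.ofReal_natCast]
        simp only [dftNoise]
        rw [_root_.map_mul, map_inv₀, Complex.conj_ofReal, _root_.map_sum]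
        simp only [_root_.map_mul, Complex.conj_ofReal]
        rw [mul_mul_mul_comm, hc, Finset.sum_mul_sum, Finset.mul_sum]
        refine Finset.sum_congr rfl fun t _ => ?_
        rw [Finset.mul_sum]
        refine Finset.sum_congr rfl fun s _ => ?_
        push_cast
        ring
      have hterm : ∀ t s : ℕ, Integrable (fun ω => ((v t ω i * v s ω i' : ℝ) : ℂ) *
          ((N : ℂ)⁻¹ *
            (Complex.exp (-((2 * Real.pi * k * t / N : ℝ) : ℂ) * Complex.I) *
              (starRingEnd ℂ)
                (Complex.exp (-((2 * Real.pi * k * s / N : ℝ) : ℂ) * Complex.I))))) μ := by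
        intro t s
        have h0 := hint (t : ℤ) ((t : ℤ) - (s : ℤ)) i i'
        rw [sub_sub_cancel] at h0
        exact h0.ofReal.mul_const _
      rw [show (fun ω => dftNoise N v k ω i * (starRingEnd ℂ) (dftNoise N v k ω i'))
          = fun ω => ∑ t ∈ Finset.range N, ∑ s ∈ Finset.range N,
              ((v t ω i * v s ω i' : ℝ) : ℂ) *
                ((N : ℂ)⁻¹ *
                  (Complex.exp (-((2 * Real.pi * k * t / N : ℝ) : ℂ) * Complex.I) *
                    (starRingEnd ℂ)
                      (Complex.exp (-((2 * Real.pi * k * s / N : ℝ) : ℂ) * Complex.I))))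
        from funext hpoint]
      rw [integral_finset_sum _ fun t _ => integrable_finset_sum _ fun s _ => hterm t s]
      refine Finset.sum_congr rfl fun t _ => ?_
      rw [integral_finset_sum _ fun s _ => hterm t s]
      refine Finset.sum_congr rfl fun s _ => ?_
      rw [integral_mul_const]
      have hio : (∫ a, ((v (t : ℤ) a i * v (s : ℤ) a i' : ℝ) : ℂ) ∂μ)
          = ((∫ a, v (t : ℤ) a i * v (s : ℤ) a i' ∂μ : ℝ) : ℂ) := integral_ofReal
      rw [hio]
      have h0 := hR (t : ℤ) ((t : ℤ) - (s : ℤ)) i i'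
      rw [sub_sub_cancel] at h0
      rw [h0]
    have hmat : (Matrix.of fun i i' =>
          ∫ ω, dftNoise N v k ω i * (starRingEnd ℂ) (dftNoise N v k ω i') ∂μ)
        = (N : ℂ)⁻¹ • ∑ t ∈ Finset.range N, ∑ s ∈ Finset.range N,
            (Complex.exp
                (-((2 * Real.pi * k * (((t : ℤ) - (s : ℤ) : ℤ) : ℝ) / N : ℝ) : ℂ) *
                  Complex.I) •
              ((R ((t : ℤ) - (s : ℤ))).map fun x => (x : ℂ))) := by
      ext i i'
      rw [Matrix.of_apply, hentry i i']
      simp only [Matrix.smul_apply, Matrix.sum_apply, Matrix.map_apply, smul_eq_mul]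
      rw [Finset.mul_sum]
      refine Finset.sum_congr rfl fun t _ => ?_
      rw [Finset.mul_sum]
      refine Finset.sum_congr rfl fun s _ => ?_
      rw [hee t s]
      ring
    rw [hmat, matCLM_smul, matCLM_sum]
    congr 1
    refine Finset.sum_congr rfl fun t _ => ?_
    rw [matCLM_sum]
    refine Finset.sum_congr rfl fun s _ => ?_
    rw [matCLM_smul]
  have := abstract_transient_bound g a hnorm (by exact hstar) N hN _ hM
  exact this
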